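/- Let m, k be natural numbers and P ∈ ℝ[X,Y] a polynomial such that Y does not divide P if m > 0 and X does not divide P if k > 0. Define F(x,y) = P(x+y, xy)/(xᵐ yᵐ (x+y)ᵏ) for real x, y with x·y·(x+y) ≠ 0. Suppose that for all E₁,E₂,E₃,E₄ ∈ ℝ with E₁+E₂+E₃+E₄ = 0 such that each of the six argument pairs (−E₁−E₂, E₁), (E₄, −E₃−E₄), (E₁, E₃), (E₂, E₄), (E₄, −E₁−E₄), (−E₃−E₂, E₃) has both entries nonzero and nonzero sum of entries, one has F(−E₁−E₂, E₁)·F(E₄, −E₃−E₄) = F(E₁,E₃)·F(E₂,E₄) and F(E₁,E₃)·F(E₂,E₄) = F(E₄, −E₁−E₄)·F(−E₃−E₂, E₃). Then F is constant: there exists c ∈ ℝ such that F(x,y) = c whenever x·y·(x+y) ≠ 0. -/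

import Mathlib

/-- Evaluation of a two-variable real polynomial at `(x, y)`. -/
noncomputable def ev (P : MvPolynomial (Fin 2) ℝ) (x y : ℝ) : ℝ :=
  MvPolynomial.eval ![x, y] P

/-- An argument pair `(a, b)` is admissible if both entries and their sum are nonzero. -/
def OkPair (a b : ℝ) : Prop := a ≠ 0 ∧ b ≠ 0 ∧ a + b ≠ 0

open Polynomial

namespace Stmt4

abbrev TT := Polynomial (Polynomial ℝ)

noncomputable def eeHom (x y : ℝ) : TT →+* ℝ :=
  (evalRingHom y).comp (evalRingHom (C x))

noncomputable def ee (g : TT) (x y : ℝ) : ℝ := eeHom x y g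

lemma ee_C (r : ℝ) (x y : ℝ) : ee (C (C r)) x y = r := by
  simp [ee, eeHom]

lemma ee_CX (x y : ℝ) : ee (C X) x y = y := by
  simp [ee, eeHom]

lemma ee_X (x y : ℝ) : ee (X : TT) x y = x := by
  simp [ee, eeHom]

lemma TT_hom_ext {S : Type*} [Semiring S] {φ ψ : TT →+* S}
    (h1 : ∀ r : ℝ, φ (C (C r)) = ψ (C (C r)))
    (h2 : φ (C X) = ψ (C X)) (h3 : φ X = ψ X) : φ = ψ := by
  apply Polynomial.ringHom_ext'
  · apply Polynomial.ringHom_ext'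
    · exact RingHom.ext h1
    · exact h2
  · exact h3

noncomputable def bisub (u v : Polynomial ℝ) : TT →+* Polynomial ℝ :=
  eval₂RingHom (eval₂RingHom Polynomial.C v) u

lemma bisub_CC (u v : Polynomial ℝ) (r : ℝ) : bisub u v (C (C r)) = C r := by
  simp [bisub]

lemma bisub_CX (u v : Polynomial ℝ) : bisub u v (C X) = v := by
  simp [bisub]

lemma bisub_X (u v : Polynomial ℝ) : bisub u v (X : TT) = u := by
  simp [bisub]

lemma eval_bisub (u v : Polynomial ℝ) (g : TT) (r : ℝ) :
    (bisub u v g).eval r = ee g (u.eval r) (v.eval r) := by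
  have key : (evalRingHom r).comp (bisub u v) = eeHom (u.eval r) (v.eval r) := by
    apply TT_hom_ext
    · intro a; simp [bisub, eeHom]
    · simp [bisub, eeHom]
    · simp [bisub, eeHom]
  have := RingHom.congr_fun key g
  simpa [ee] using this

noncomputable def bisubT (u v : TT) : TT →+* TT :=
  eval₂RingHom (eval₂RingHom (Polynomial.C.comp Polynomial.C) v) u

lemma ee_bisubT (u v : TT) (g : TT) (x y : ℝ) :
    ee (bisubT u v g) x y = ee g (ee u x y) (ee v x y) := by
  have key : (eeHom x y).comp (bisubT u v) = eeHom (ee u x y) (ee v x y) := by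
    apply TT_hom_ext
    · intro a; simp [bisubT, eeHom, ee]
    · simp [bisubT, eeHom, ee]
    · simp [bisubT, eeHom, ee]
  have := RingHom.congr_fun key g
  simpa [ee] using this

lemma ee_map (g : TT) (x y : ℝ) :
    ee g x y = (g.map (evalRingHom y)).eval x := by
  have key : (evalRingHom x).comp (mapRingHom (evalRingHom y)) = eeHom x y := by
    apply TT_hom_ext
    · intro a; simp [eeHom]
    · simp [eeHom]
    · simp [eeHom]
  have := RingHom.congr_fun key g
  simpa [ee] using this.symm

lemma TT_funext {g h : TT} (H : ∀ x y, ee g x y = ee h x y) : g = h := by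
  have key : ∀ y, g.map (evalRingHom y) = h.map (evalRingHom y) := by
    intro y
    apply Polynomial.funext
    intro x
    rw [← ee_map, ← ee_map]; exact H x y
  apply Polynomial.ext
  intro n
  apply Polynomial.funext
  intro y
  have := congrArg (fun q => Polynomial.coeff q n) (key y)
  simpa [Polynomial.coeff_map] using this

lemma ee_zero_left (g : TT) (t : ℝ) : ee g 0 t = (g.coeff 0).eval t := by
  simp [ee, eeHom, Polynomial.coeff_zero_eq_eval_zero]



noncomputable def fT (P : MvPolynomial (Fin 2) ℝ) : TT :=
  MvPolynomial.aeval ![X + C X, X * C X] P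

lemma ee_fT (P : MvPolynomial (Fin 2) ℝ) (x y : ℝ) :
    ee (fT P) x y = ev P (x + y) (x * y) := by
  unfold fT ev
  show eeHom x y _ = _
  rw [MvPolynomial.aeval_def, MvPolynomial.eval₂_comp_left (eeHom x y)]
  rw [MvPolynomial.eval]
  congr 1
  · apply RingHom.ext; intro r
    simp [eeHom, Polynomial.algebraMap_apply]
  · funext i
    fin_cases i <;> simp [eeHom]

lemma exists_nonroot (l : List (Polynomial ℝ)) (hl : ∀ q ∈ l, q ≠ 0) :
    ∃ x : ℝ, ∀ q ∈ l, q.eval x ≠ 0 := by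
  have hprod : l.prod ≠ 0 := List.prod_ne_zero (fun h0 => hl 0 h0 rfl)
  have hfin : Set.Finite {x : ℝ | l.prod.IsRoot x} := Polynomial.finite_setOf_isRoot hprod
  have : Set.Infinite {x : ℝ | l.prod.IsRoot x}ᶜ := Set.Finite.infinite_compl hfin
  obtain ⟨x, hx⟩ := this.nonempty
  refine ⟨x, ?_⟩
  intro q hq hq0
  apply hx
  show l.prod.eval x = 0
  rw [Polynomial.eval_list_prod]
  exact List.prod_eq_zero (List.mem_map.mpr ⟨q, hq, hq0⟩)

lemma comp_ne_zero {q r : Polynomial ℝ} (hq : q ≠ 0) (hsur : Function.Surjective (fun x => r.eval x)) :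
    q.comp r ≠ 0 := by
  intro h0
  apply hq
  apply Polynomial.funext
  intro t
  obtain ⟨x, hx⟩ := hsur t
  have := congrArg (fun p => Polynomial.eval x p) h0
  simpa [Polynomial.eval_comp, hx] using this

lemma X1_dvd_of_eval (P : MvPolynomial (Fin 2) ℝ)
    (hP : ∀ s : ℝ, MvPolynomial.eval ![s, 0] P = 0) : MvPolynomial.X 1 ∣ P := by
  classical
  set Φ : MvPolynomial (Fin 2) ℝ →ₐ[ℝ] MvPolynomial (Fin 2) ℝ :=
    MvPolynomial.aeval ![MvPolynomial.X 0, 0] with hΦ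
  have dvd_sub : ∀ Q : MvPolynomial (Fin 2) ℝ, MvPolynomial.X 1 ∣ Q - Φ Q := by
    intro Q
    induction Q using MvPolynomial.induction_on with
    | C a => simp [hΦ]
    | add p q hp hq =>
      have : p + q - Φ (p + q) = (p - Φ p) + (q - Φ q) := by
        rw [map_add]; ring
      rw [this]; exact dvd_add hp hq
    | mul_X p i hp =>
      fin_cases i
      · show MvPolynomial.X 1 ∣ p * MvPolynomial.X 0 - Φ (p * MvPolynomial.X 0)
        have : p * MvPolynomial.X 0 - Φ (p * MvPolynomial.X 0)
            = (p - Φ p) * MvPolynomial.X 0 := by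
          rw [map_mul]
          simp [hΦ]
          ring
        rw [this]
        exact Dvd.dvd.mul_right hp _
      · show MvPolynomial.X 1 ∣ p * MvPolynomial.X 1 - Φ (p * MvPolynomial.X 1)
        have : p * MvPolynomial.X 1 - Φ (p * MvPolynomial.X 1) = p * MvPolynomial.X 1 := by
          rw [map_mul]
          simp [hΦ]
        rw [this]
        exact Dvd.intro_left p rfl
  have hΦP : Φ P = 0 := by
    apply MvPolynomial.funext
    intro v
    rw [map_zero]
    have : MvPolynomial.eval v (Φ P) = MvPolynomial.eval ![v 0, 0] P := by
      rw [hΦ, MvPolynomial.aeval_def, MvPolynomial.eval₂_comp_left (MvPolynomial.eval v)]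
      rw [MvPolynomial.eval]
      congr 1
      · apply RingHom.ext; intro r; simp
      · funext i; fin_cases i <;> simp
    rw [this]; exact hP (v 0)
  have := dvd_sub P
  rwa [hΦP, sub_zero] at this

lemma X0_dvd_of_eval (P : MvPolynomial (Fin 2) ℝ)
    (hP : ∀ t : ℝ, MvPolynomial.eval ![0, t] P = 0) : MvPolynomial.X 0 ∣ P := by
  classical
  set Φ : MvPolynomial (Fin 2) ℝ →ₐ[ℝ] MvPolynomial (Fin 2) ℝ :=
    MvPolynomial.aeval ![0, MvPolynomial.X 1] with hΦ
  have dvd_sub : ∀ Q : MvPolynomial (Fin 2) ℝ, MvPolynomial.X 0 ∣ Q - Φ Q := by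
    intro Q
    induction Q using MvPolynomial.induction_on with
    | C a => simp [hΦ]
    | add p q hp hq =>
      have : p + q - Φ (p + q) = (p - Φ p) + (q - Φ q) := by
        rw [map_add]; ring
      rw [this]; exact dvd_add hp hq
    | mul_X p i hp =>
      fin_cases i
      · show MvPolynomial.X 0 ∣ p * MvPolynomial.X 0 - Φ (p * MvPolynomial.X 0)
        have : p * MvPolynomial.X 0 - Φ (p * MvPolynomial.X 0) = p * MvPolynomial.X 0 := by
          rw [map_mul]
          simp [hΦ]
        rw [this]
        exact Dvd.intro_left p rfl
      · show MvPolynomial.X 0 ∣ p * MvPolynomial.X 1 - Φ (p * MvPolynomial.X 1)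
        have : p * MvPolynomial.X 1 - Φ (p * MvPolynomial.X 1)
            = (p - Φ p) * MvPolynomial.X 1 := by
          rw [map_mul]
          simp [hΦ]
          ring
        rw [this]
        exact Dvd.dvd.mul_right hp _
  have hΦP : Φ P = 0 := by
    apply MvPolynomial.funext
    intro v
    rw [map_zero]
    have : MvPolynomial.eval v (Φ P) = MvPolynomial.eval ![0, v 1] P := by
      rw [hΦ, MvPolynomial.aeval_def, MvPolynomial.eval₂_comp_left (MvPolynomial.eval v)]
      rw [MvPolynomial.eval]
      congr 1
      · apply RingHom.ext; intro r; simp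
      · funext i; fin_cases i <;> simp
    rw [this]; exact hP (v 1)
  have := dvd_sub P
  rwa [hΦP, sub_zero] at this

lemma ee_Xpow_mul (n : ℕ) (q : TT) (x y : ℝ) : ee (X ^ n * q) x y = x ^ n * ee q x y := by
  have h1 : ee (X ^ n * q) x y = ee (X : TT) x y ^ n * ee q x y := by
    show eeHom x y _ = _
    rw [map_mul, map_pow]
    rfl
  rw [h1, ee_X]

lemma rm_eq {W : Polynomial ℝ} (n : ℕ) (r : ℝ) (hW : W.eval r ≠ 0) :
    ((X - C r) ^ n * W).rootMultiplicity r = n := by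
  have hW0 : W ≠ 0 := fun h => hW (by simp [h])
  have hne : (X - C r) ^ n * W ≠ 0 :=
    mul_ne_zero (pow_ne_zero _ (Polynomial.X_sub_C_ne_zero r)) hW0
  rw [Polynomial.rootMultiplicity_mul hne, Polynomial.rootMultiplicity_X_sub_C_pow,
    Polynomial.rootMultiplicity_eq_zero hW, add_zero]

lemma rm_eq_neg {W : Polynomial ℝ} (n : ℕ) (r : ℝ) (hW : W.eval r ≠ 0) :
    ((-(X - C r)) ^ n * W).rootMultiplicity r = n := by
  have h1 : (-(X - C r)) ^ n * W = (X - C r) ^ n * ((-1) ^ n * W) := by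
    rw [neg_pow]; ring
  rw [h1]
  apply rm_eq
  rw [Polynomial.eval_mul, Polynomial.eval_pow, Polynomial.eval_neg, Polynomial.eval_one]
  exact mul_ne_zero (pow_ne_zero _ (by norm_num)) hW

lemma rm_pow (n : ℕ) (r : ℝ) : ((X - C r) ^ n : Polynomial ℝ).rootMultiplicity r = n := by
  have := rm_eq (W := 1) n r (by simp)
  simpa using this

lemma rm_neg_pow (n : ℕ) (r : ℝ) : ((-(X - C r)) ^ n : Polynomial ℝ).rootMultiplicity r = n := by
  have := rm_eq_neg (W := 1) n r (by simp)
  simpa using this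

lemma rm_zero {q : Polynomial ℝ} (r : ℝ) (h : q.eval r ≠ 0) : q.rootMultiplicity r = 0 :=
  Polynomial.rootMultiplicity_eq_zero h


lemma eval_zero_line (P : MvPolynomial (Fin 2) ℝ)
    (hz : ∀ w : ℝ, MvPolynomial.eval ![0, w * (0 - w)] P = 0) :
    ∀ t : ℝ, MvPolynomial.eval ![0, t] P = 0 := by
  classical
  set pol : Polynomial ℝ := MvPolynomial.aeval ![(0 : Polynomial ℝ), X] P with hpoldef
  have hpole : ∀ t : ℝ, pol.eval t = MvPolynomial.eval ![0, t] P := by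
    intro t
    show Polynomial.evalRingHom t pol = _
    rw [hpoldef, MvPolynomial.aeval_def,
      MvPolynomial.eval₂_comp_left (Polynomial.evalRingHom t), MvPolynomial.eval]
    congr 1
    · apply RingHom.ext; intro r
      simp [Polynomial.algebraMap_apply]
    · funext i; fin_cases i <;> simp
  have hpol0 : pol = 0 := by
    apply Polynomial.eq_zero_of_infinite_isRoot
    apply Set.infinite_of_injective_forall_mem
      (f := fun n : ℕ => -((((n : ℝ)) + 1) * (((n : ℝ)) + 1)))
    · intro p' q' hpq
      simp only [neg_inj] at hpq
      have hzp : (0:ℝ) ≤ (p' : ℝ) + 1 := by positivity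
      have hzq : (0:ℝ) ≤ (q' : ℝ) + 1 := by positivity
      have h1 : ((p' : ℝ)) + 1 = ((q' : ℝ)) + 1 := (mul_self_inj hzp hzq).mp hpq
      have h2 : ((p' : ℝ)) = ((q' : ℝ)) := by linarith
      exact_mod_cast h2
    · intro n
      show pol.IsRoot _
      rw [Polynomial.IsRoot, hpole]
      have h2 := hz (((n : ℝ)) + 1)
      rw [show (((n : ℝ)) + 1) * (0 - (((n : ℝ)) + 1))
          = -(((((n : ℝ)) + 1)) * ((((n : ℝ)) + 1))) from by ring] at h2
      exact h2
  intro t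
  rw [← hpole, hpol0]
  simp


end Stmt4

open Stmt4 Polynomial

theorem stmt_4 (m k : ℕ) (P : MvPolynomial (Fin 2) ℝ)
    (hY : 0 < m → ¬ (MvPolynomial.X 1 ∣ P))
    (hX : 0 < k → ¬ (MvPolynomial.X 0 ∣ P))
    (F : ℝ → ℝ → ℝ)
    (hF : ∀ x y : ℝ, x * y * (x + y) ≠ 0 →
      F x y = ev P (x + y) (x * y) / (x ^ m * y ^ m * (x + y) ^ k))
    (h : ∀ E1 E2 E3 E4 : ℝ, E1 + E2 + E3 + E4 = 0 →
      OkPair (-E1 - E2) E1 → OkPair E4 (-E3 - E4) → OkPair E1 E3 → OkPair E2 E4 →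
      OkPair E4 (-E1 - E4) → OkPair (-E3 - E2) E3 →
      (F (-E1 - E2) E1 * F E4 (-E3 - E4) = F E1 E3 * F E2 E4 ∧
        F E1 E3 * F E2 E4 = F E4 (-E1 - E4) * F (-E3 - E2) E3)) :
    ∃ c : ℝ, ∀ x y : ℝ, x * y * (x + y) ≠ 0 → F x y = c := by
  classical
  set f : TT := fT P with hfdef
  have hfe : ∀ x y : ℝ, ee f x y = ev P (x + y) (x * y) := fun x y => ee_fT P x y
  by_cases hf0 : f = 0
  · refine ⟨0, fun x y hxy => ?_⟩
    rw [hF x y hxy]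
    have : ev P (x + y) (x * y) = 0 := by
      rw [← hfe x y, hf0]
      exact map_zero (eeHom x y)
    rw [this, zero_div]
  -- main case
  have hsymm : ∀ x y : ℝ, ee f x y = ee f y x := by
    intro x y; rw [hfe, hfe, add_comm y x, mul_comm y x]
  set fstar : TT := bisubT (C X) (X - C X) f with hfsdef
  have hfs : ∀ u w : ℝ, ee fstar u w = ee f w (u - w) := by
    intro u w
    rw [hfsdef, ee_bisubT]
    congr 1
    · exact ee_CX u w
    · show ee (X - C X) u w = u - w
      have hsub : ee (X - C X) u w = ee X u w - ee (C X) u w := map_sub (eeHom u w) _ _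
      rw [hsub, ee_X, ee_CX]
  have hfs' : ∀ x y : ℝ, ee f x y = ee fstar (x + y) x := by
    intro x y
    rw [hfs (x + y) x]
    congr 1
    ring
  have hfs0 : fstar ≠ 0 := by
    intro hz
    apply hf0
    apply TT_funext
    intro x y
    rw [hfs' x y, hz]
    simp [ee]
  -- basic degrees
  set A := f.natTrailingDegree with hA
  set pdeg := f.natDegree with hp
  set CC := fstar.natTrailingDegree with hCC
  obtain ⟨g, hg⟩ : (X : TT) ^ A ∣ f :=
    Polynomial.X_pow_dvd_iff.mpr (fun d hd => Polynomial.coeff_eq_zero_of_lt_natTrailingDegree hd)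
  obtain ⟨gs, hgs⟩ : (X : TT) ^ CC ∣ fstar :=
    Polynomial.X_pow_dvd_iff.mpr (fun d hd => Polynomial.coeff_eq_zero_of_lt_natTrailingDegree hd)
  have hgc : g.coeff 0 = f.coeff A := by
    rw [hg]
    have := Polynomial.coeff_X_pow_mul g A 0
    simpa using this.symm
  have hgsc : gs.coeff 0 = fstar.coeff CC := by
    rw [hgs]
    have := Polynomial.coeff_X_pow_mul gs CC 0
    simpa using this.symm
  have htcf : f.coeff A ≠ 0 := by
    intro hz
    apply hf0
    apply Polynomial.trailingCoeff_eq_zero.mp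
    exact hz
  have htcs : fstar.coeff CC ≠ 0 := by
    intro hz
    apply hfs0
    apply Polynomial.trailingCoeff_eq_zero.mp
    exact hz
  have hlcf : f.coeff pdeg ≠ 0 := by
    intro hz
    apply hf0
    apply Polynomial.leadingCoeff_eq_zero.mp
    exact hz
  -- the three auxiliary two-variable polynomials
  set g8 : TT := bisubT (-(X + C X)) X f with h8def
  set g9 : TT := bisubT (-(X + C X)) (C X) f with h9def
  set g10 : TT := bisubT (-X) (X + C X) f with h10def
  have ee_neg_add : ∀ x y : ℝ, ee (-(X + C X)) x y = -(x + y) := by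
    intro x y
    have h1 : ee (-(X + C X)) x y = -(ee X x y + ee (C X) x y) := by
      show eeHom x y (-(X + C X)) = _
      rw [map_neg, map_add]; rfl
    rw [h1, ee_X, ee_CX]
  have ee_negX : ∀ x y : ℝ, ee (-X : TT) x y = -x := by
    intro x y
    have h1 : ee (-X : TT) x y = -(ee X x y) := by
      show eeHom x y (-X) = _
      rw [map_neg]; rfl
    rw [h1, ee_X]
  have ee_add : ∀ x y : ℝ, ee (X + C X) x y = x + y := by
    intro x y
    have h1 : ee (X + C X) x y = ee X x y + ee (C X) x y := map_add (eeHom x y) _ _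
    rw [h1, ee_X, ee_CX]
  have ee_g8 : ∀ b c : ℝ, ee g8 b c = ee f (-(b + c)) b := by
    intro b c; rw [h8def, ee_bisubT, ee_neg_add, ee_X]
  have ee_g9 : ∀ b c : ℝ, ee g9 b c = ee f (-(b + c)) c := by
    intro b c; rw [h9def, ee_bisubT, ee_neg_add, ee_CX]
  have ee_g10 : ∀ b c : ℝ, ee g10 b c = ee f (-b) (b + c) := by
    intro b c; rw [h10def, ee_bisubT, ee_negX, ee_add]
  have hg8 : g8 ≠ 0 := by
    intro hz
    apply hf0
    apply TT_funext
    intro x y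
    have h1 : ee g8 y (-x - y) = 0 := by rw [hz]; simp [ee]
    rw [ee_g8] at h1
    have h2 : -(y + (-x - y)) = x := by ring
    rw [h2] at h1
    rw [h1]
    simp [ee]
  have hg9 : g9 ≠ 0 := by
    intro hz
    apply hf0
    apply TT_funext
    intro x y
    have h1 : ee g9 (-x - y) y = 0 := by rw [hz]; simp [ee]
    rw [ee_g9] at h1
    have h2 : -(-x - y + y) = x := by ring
    rw [h2] at h1
    rw [h1]
    simp [ee]
  have hg10 : g10 ≠ 0 := by
    intro hz
    apply hf0
    apply TT_funext
    intro x y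
    have h1 : ee g10 (-x) (x + y) = 0 := by rw [hz]; simp [ee]
    rw [ee_g10] at h1
    have h2 : - -x = x := by ring
    have h3 : -x + (x + y) = y := by ring
    rw [h2, h3] at h1
    rw [h1]
    simp [ee]
  -- choose generic c₀
  have neg_surj : Function.Surjective (fun x : ℝ => Polynomial.eval x (-X : Polynomial ℝ)) := by
    intro t; exact ⟨-t, by simp⟩
  obtain ⟨c₀, hc⟩ := exists_nonroot
    [X, f.coeff A, f.coeff pdeg, (gs.coeff 0).comp (-X),
      g8.leadingCoeff, g9.leadingCoeff, g10.leadingCoeff]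
    (by
      intro q hq
      simp only [List.mem_cons, List.mem_singleton] at hq
      rcases hq with rfl | rfl | rfl | rfl | rfl | rfl | rfl | hnil
      · exact Polynomial.X_ne_zero
      · exact htcf
      · exact hlcf
      · exact comp_ne_zero (by rw [hgsc]; exact htcs) neg_surj
      · exact Polynomial.leadingCoeff_ne_zero.mpr hg8
      · exact Polynomial.leadingCoeff_ne_zero.mpr hg9
      · exact Polynomial.leadingCoeff_ne_zero.mpr hg10
      · exact absurd hnil List.not_mem_nil)
  have hc₀ : c₀ ≠ 0 := by simpa using hc X (by simp)
  have c1 : (f.coeff A).eval c₀ ≠ 0 := hc _ (by simp)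
  have c2 : (f.coeff pdeg).eval c₀ ≠ 0 := hc _ (by simp)
  have c6 : (gs.coeff 0).eval (-c₀) ≠ 0 := by
    have := hc ((gs.coeff 0).comp (-X)) (by simp)
    simpa [Polynomial.eval_comp] using this
  have hl8 : (g8.leadingCoeff).eval c₀ ≠ 0 := hc _ (by simp)
  have hl9 : (g9.leadingCoeff).eval c₀ ≠ 0 := hc _ (by simp)
  have hl10 : (g10.leadingCoeff).eval c₀ ≠ 0 := hc _ (by simp)
  -- specialize the two-variable polynomials at c₀
  have hm8 : g8.map (evalRingHom c₀) ≠ 0 := by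
    intro hz
    apply hl8
    have := congrArg (fun q => Polynomial.coeff q g8.natDegree) hz
    simpa [Polynomial.coeff_map] using this
  have hm9 : g9.map (evalRingHom c₀) ≠ 0 := by
    intro hz
    apply hl9
    have := congrArg (fun q => Polynomial.coeff q g9.natDegree) hz
    simpa [Polynomial.coeff_map] using this
  have hm10 : g10.map (evalRingHom c₀) ≠ 0 := by
    intro hz
    apply hl10
    have := congrArg (fun q => Polynomial.coeff q g10.natDegree) hz
    simpa [Polynomial.coeff_map] using this
  -- choose generic b₀
  have surj1 : Function.Surjective (fun x : ℝ => Polynomial.eval x (X + C c₀)) := by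
    intro t; exact ⟨t - c₀, by simp⟩
  have surj2 : Function.Surjective (fun x : ℝ => Polynomial.eval x (-(X + C c₀))) := by
    intro t
    refine ⟨-t - c₀, ?_⟩
    simp only [Polynomial.eval_neg, Polynomial.eval_add, Polynomial.eval_X, Polynomial.eval_C]
    ring
  obtain ⟨b₀, hb⟩ := exists_nonroot
    [X, X + C c₀, f.coeff pdeg, (f.coeff pdeg).comp (X + C c₀),
      (gs.coeff 0).comp (-(X + C c₀)), (gs.coeff 0).comp (-X),
      g8.map (evalRingHom c₀), g9.map (evalRingHom c₀), g10.map (evalRingHom c₀)]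
    (by
      intro q hq
      simp only [List.mem_cons, List.mem_singleton] at hq
      rcases hq with rfl | rfl | rfl | rfl | rfl | rfl | rfl | rfl | rfl | hnil
      · exact Polynomial.X_ne_zero
      · exact Polynomial.X_add_C_ne_zero c₀
      · exact hlcf
      · exact comp_ne_zero hlcf surj1
      · exact comp_ne_zero (by rw [hgsc]; exact htcs) surj2
      · exact comp_ne_zero (by rw [hgsc]; exact htcs) neg_surj
      · exact hm8
      · exact hm9
      · exact hm10
      · exact absurd hnil List.not_mem_nil)
  have hb₀ : b₀ ≠ 0 := by simpa using hb X (by simp)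
  have hs₀ : b₀ + c₀ ≠ 0 := by
    have h' := hb (X + C c₀) (by simp)
    intro hz
    exact h' (by rw [Polynomial.eval_add, Polynomial.eval_X, Polynomial.eval_C, hz])
  set s₀ := b₀ + c₀ with hs₀def
  have c3 : (f.coeff pdeg).eval b₀ ≠ 0 := hb _ (by simp)
  have c4 : (f.coeff pdeg).eval s₀ ≠ 0 := by
    have := hb ((f.coeff pdeg).comp (X + C c₀)) (by simp)
    simpa [Polynomial.eval_comp] using this
  have c5 : (gs.coeff 0).eval (-s₀) ≠ 0 := by
    have h' := hb ((gs.coeff 0).comp (-(X + C c₀))) (by simp)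
    rw [Polynomial.eval_comp] at h'
    have hpt : Polynomial.eval b₀ (-(X + C c₀)) = -s₀ := by
      simp only [Polynomial.eval_neg, Polynomial.eval_add, Polynomial.eval_X, Polynomial.eval_C,
        hs₀def]
    rwa [hpt] at h'
  have c7 : (gs.coeff 0).eval (-b₀) ≠ 0 := by
    have := hb ((gs.coeff 0).comp (-X)) (by simp)
    simpa [Polynomial.eval_comp] using this
  have c8 : ee f (-s₀) b₀ ≠ 0 := by
    have := hb (g8.map (evalRingHom c₀)) (by simp)
    rw [show Polynomial.eval b₀ (g8.map (evalRingHom c₀)) = ee g8 b₀ c₀ from (ee_map _ _ _).symm] at this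
    rwa [ee_g8] at this
  have c9 : ee f (-s₀) c₀ ≠ 0 := by
    have := hb (g9.map (evalRingHom c₀)) (by simp)
    rw [show Polynomial.eval b₀ (g9.map (evalRingHom c₀)) = ee g9 b₀ c₀ from (ee_map _ _ _).symm] at this
    rwa [ee_g9] at this
  have c10 : ee f (-b₀) s₀ ≠ 0 := by
    have := hb (g10.map (evalRingHom c₀)) (by simp)
    rw [show Polynomial.eval b₀ (g10.map (evalRingHom c₀)) = ee g10 b₀ c₀ from (ee_map _ _ _).symm] at this
    rwa [ee_g10] at this
  -- one-variable polynomials in the parameter a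
  set dp : Polynomial ℝ := -(X + C (b₀ + c₀)) with hdp
  set q1 : Polynomial ℝ := f.map (evalRingHom c₀) with hq1
  set q2 : Polynomial ℝ := (f.map (evalRingHom b₀)).comp dp with hq2
  set q3 : Polynomial ℝ := (f.map (evalRingHom (b₀ + c₀))).comp dp with hq3
  have evdp : ∀ r : ℝ, dp.eval r = -(r + (b₀ + c₀)) := by
    intro r
    rw [hdp]
    simp
  have ev1 : ∀ r : ℝ, q1.eval r = ee f r c₀ := by
    intro r; rw [hq1, ← ee_map]
  have ev2 : ∀ r : ℝ, q2.eval r = ee f (-(r + (b₀ + c₀))) b₀ := by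
    intro r; rw [hq2, Polynomial.eval_comp, ← ee_map, evdp]
  have ev3 : ∀ r : ℝ, q3.eval r = ee f (-(r + (b₀ + c₀))) (b₀ + c₀) := by
    intro r; rw [hq3, Polynomial.eval_comp, ← ee_map, evdp]
  set Lp : Polynomial ℝ :=
    q1 * q2 * dp ^ m * (-X) ^ k *
      C ((b₀ + c₀) ^ m * ((-(b₀ + c₀)) ^ m * (c₀ ^ m * (-b₀) ^ k))) with hLp
  set Rp : Polynomial ℝ :=
    q3 * C (ee f (-(b₀ + c₀)) c₀) * X ^ m * (X + C c₀) ^ k * dp ^ m *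
      (-(X + C c₀)) ^ k * C (c₀ ^ m * b₀ ^ m) with hRp
  have hLR : Lp = Rp := by
    apply Polynomial.eq_of_infinite_eval_eq
    have hfin : ({0, -b₀, -c₀, -(b₀ + c₀)} : Set ℝ).Finite := Set.toFinite _
    apply Set.Infinite.mono ?_ hfin.infinite_compl
    intro a ha
    simp only [Set.mem_compl_iff, Set.mem_insert_iff, Set.mem_singleton_iff, not_or] at ha
    obtain ⟨ha0, hab, hac, has⟩ := ha
    have nab : a + b₀ ≠ 0 := fun hz => hab (by linarith)
    have nac : a + c₀ ≠ 0 := fun hz => hac (by linarith)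
    have nas : a + (b₀ + c₀) ≠ 0 := fun hz => has (by linarith)
    have nE4 : -(a + (b₀ + c₀)) ≠ 0 := neg_ne_zero.mpr nas
    have key := (h a b₀ c₀ (-(a + (b₀ + c₀))) (by ring)
      ⟨fun hz => hab (by linarith), ha0, fun hz => hb₀ (by linarith)⟩
      ⟨nE4, fun hz => nab (by linarith), fun hz => hc₀ (by linarith)⟩
      ⟨ha0, hc₀, nac⟩
      ⟨hb₀, nE4, fun hz => nac (by linarith)⟩
      ⟨nE4, fun hz => hs₀ (by linarith), fun hz => ha0 (by linarith)⟩
      ⟨fun hz => hs₀ (by linarith), hc₀, fun hz => hb₀ (by linarith)⟩).2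
    rw [show -a - -(a + (b₀ + c₀)) = b₀ + c₀ from by ring,
      show -c₀ - b₀ = -(b₀ + c₀) from by ring] at key
    have hu1 := hF a c₀ (mul_ne_zero (mul_ne_zero ha0 hc₀) nac)
    rw [eq_div_iff (mul_ne_zero (mul_ne_zero (pow_ne_zero _ ha0) (pow_ne_zero _ hc₀))
      (pow_ne_zero _ nac))] at hu1
    have hu2 := hF b₀ (-(a + (b₀ + c₀)))
      (mul_ne_zero (mul_ne_zero hb₀ nE4) (fun hz => nac (by linarith)))
    rw [eq_div_iff (mul_ne_zero (mul_ne_zero (pow_ne_zero _ hb₀) (pow_ne_zero _ nE4))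
      (pow_ne_zero _ (fun hz => nac (by linarith))))] at hu2
    have hu3 := hF (-(a + (b₀ + c₀))) (b₀ + c₀)
      (mul_ne_zero (mul_ne_zero nE4 hs₀) (fun hz => ha0 (by linarith)))
    rw [eq_div_iff (mul_ne_zero (mul_ne_zero (pow_ne_zero _ nE4) (pow_ne_zero _ hs₀))
      (pow_ne_zero _ (fun hz => ha0 (by linarith))))] at hu3
    have hu4 := hF (-(b₀ + c₀)) c₀
      (mul_ne_zero (mul_ne_zero (neg_ne_zero.mpr hs₀) hc₀) (fun hz => hb₀ (by linarith)))
    rw [eq_div_iff (mul_ne_zero (mul_ne_zero (pow_ne_zero _ (neg_ne_zero.mpr hs₀))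
      (pow_ne_zero _ hc₀)) (pow_ne_zero _ (fun hz => hb₀ (by linarith))))] at hu4
    show Lp.eval a = Rp.eval a
    rw [hLp, hRp]
    simp only [Polynomial.eval_mul, Polynomial.eval_pow, Polynomial.eval_neg,
      Polynomial.eval_add, Polynomial.eval_X, Polynomial.eval_C]
    rw [ev1 a, ev2 a, ev3 a, evdp a]
    rw [hsymm (-(a + (b₀ + c₀))) b₀]
    simp only [hfe]
    rw [← hu1, ← hu2, ← hu3, ← hu4]
    linear_combination ((a ^ m * c₀ ^ m * (a + c₀) ^ k) *
      (b₀ ^ m * (-(a + (b₀ + c₀))) ^ m * (b₀ + -(a + (b₀ + c₀))) ^ k) *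
      ((-(a + (b₀ + c₀))) ^ m * (b₀ + c₀) ^ m * (-(a + (b₀ + c₀)) + (b₀ + c₀)) ^ k) *
      ((-(b₀ + c₀)) ^ m * c₀ ^ m * (-(b₀ + c₀) + c₀) ^ k)) * key
  -- normalize the generic conditions
  rw [hs₀def] at hs₀ c4 c5 c8 c9 c10
  have hXC0 : (X : Polynomial ℝ) = X - C 0 := by rw [Polynomial.C_0, sub_zero]
  have hXCc : (X + C c₀ : Polynomial ℝ) = X - C (-c₀) := by rw [map_neg, sub_neg_eq_add]
  -- q1 facts
  have n1 : q1 ≠ 0 := by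
    intro hz
    apply c2
    have := congrArg (fun q => Polynomial.coeff q pdeg) hz
    simpa [hq1, Polynomial.coeff_map] using this
  have nd1 : q1.natDegree = pdeg := by
    apply le_antisymm
    · rw [hq1, hp]; exact Polynomial.natDegree_map_le
    · exact Polynomial.le_natDegree_of_ne_zero (by rw [hq1, Polynomial.coeff_map]; exact c2)
  have rm1_0 : Polynomial.rootMultiplicity 0 q1 = A := by
    have hq1f : q1 = (X - C 0) ^ A * (g.map (evalRingHom c₀)) := by
      rw [← hXC0, hq1, hg, Polynomial.map_mul, Polynomial.map_pow, Polynomial.map_X]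
    rw [hq1f]
    apply rm_eq
    rw [← Polynomial.coeff_zero_eq_eval_zero, Polynomial.coeff_map, hgc]
    exact c1
  have hq1s : q1 = (X + C c₀) ^ CC * bisub (X + C c₀) X gs := by
    apply Polynomial.funext
    intro r
    rw [Polynomial.eval_mul, Polynomial.eval_pow, eval_bisub, ev1 r, hfs' r c₀, hgs,
      ee_Xpow_mul]
    simp only [Polynomial.eval_add, Polynomial.eval_X, Polynomial.eval_C]
  have rm1_c : Polynomial.rootMultiplicity (-c₀) q1 = CC := by
    rw [hq1s, hXCc]
    apply rm_eq
    rw [eval_bisub]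
    rw [show Polynomial.eval (-c₀) (X - C (-c₀)) = 0 from by simp]
    rw [Polynomial.eval_X, ee_zero_left]
    exact c6
  -- q2 facts
  have rm2_0 : Polynomial.rootMultiplicity 0 q2 = 0 := by
    apply rm_zero
    rw [ev2 0, show -((0:ℝ) + (b₀ + c₀)) = -(b₀ + c₀) from by ring]
    exact c8
  have n2 : q2 ≠ 0 := by
    intro hz
    apply c8
    have h1 : q2.eval 0 = 0 := by rw [hz]; simp
    rw [ev2 0, show -((0:ℝ) + (b₀ + c₀)) = -(b₀ + c₀) from by ring] at h1
    exact h1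
  have nddp : dp.natDegree = 1 := by
    rw [hdp, Polynomial.natDegree_neg, Polynomial.natDegree_X_add_C]
  have nd2 : q2.natDegree = pdeg := by
    have hmapb : (f.map (evalRingHom b₀)).natDegree = pdeg := by
      apply le_antisymm
      · rw [hp]; exact Polynomial.natDegree_map_le
      · exact Polynomial.le_natDegree_of_ne_zero (by rw [Polynomial.coeff_map]; exact c3)
    rw [hq2, Polynomial.natDegree_comp, hmapb, nddp, mul_one]
  have hq2s : q2 = (-(X + C c₀)) ^ CC * bisub (-(X + C c₀)) (-(X + C (b₀ + c₀))) gs := by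
    apply Polynomial.funext
    intro r
    rw [Polynomial.eval_mul, Polynomial.eval_pow, eval_bisub, ev2 r,
      hfs' (-(r + (b₀ + c₀))) b₀,
      show -(r + (b₀ + c₀)) + b₀ = -(r + c₀) from by ring, hgs, ee_Xpow_mul]
    simp only [Polynomial.eval_neg, Polynomial.eval_add, Polynomial.eval_X, Polynomial.eval_C]
  have rm2_c : Polynomial.rootMultiplicity (-c₀) q2 = CC := by
    rw [hq2s, hXCc]
    apply rm_eq_neg
    rw [eval_bisub]
    rw [show Polynomial.eval (-c₀) (-(X - C (-c₀))) = 0 from by simp]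
    rw [show Polynomial.eval (-c₀) (-(X + C (b₀ + c₀))) = -b₀ from by
      simp only [Polynomial.eval_neg, Polynomial.eval_add, Polynomial.eval_X, Polynomial.eval_C]
      ring]
    rw [ee_zero_left]
    exact c7
  -- q3 facts
  have rm3_c : Polynomial.rootMultiplicity (-c₀) q3 = 0 := by
    apply rm_zero
    rw [ev3 (-c₀), show -((-c₀) + (b₀ + c₀)) = -b₀ from by ring]
    exact c10
  have n3 : q3 ≠ 0 := by
    intro hz
    apply c10
    have h1 : q3.eval (-c₀) = 0 := by rw [hz]; simp
    rw [ev3 (-c₀), show -((-c₀) + (b₀ + c₀)) = -b₀ from by ring] at h1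
    exact h1
  have nd3 : q3.natDegree = pdeg := by
    have hmaps : (f.map (evalRingHom (b₀ + c₀))).natDegree = pdeg := by
      apply le_antisymm
      · rw [hp]; exact Polynomial.natDegree_map_le
      · exact Polynomial.le_natDegree_of_ne_zero (by rw [Polynomial.coeff_map]; exact c4)
    rw [hq3, Polynomial.natDegree_comp, hmaps, nddp, mul_one]
  have hq3s : q3 = (-(X - C 0)) ^ CC * bisub (-(X - C 0)) (-(X + C (b₀ + c₀))) gs := by
    apply Polynomial.funext
    intro r
    rw [Polynomial.eval_mul, Polynomial.eval_pow, eval_bisub, ev3 r,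
      hfs' (-(r + (b₀ + c₀))) (b₀ + c₀),
      show -(r + (b₀ + c₀)) + (b₀ + c₀) = -(r - 0) from by ring, hgs, ee_Xpow_mul]
    simp only [Polynomial.eval_neg, Polynomial.eval_add, Polynomial.eval_sub,
      Polynomial.eval_X, Polynomial.eval_C]
  have rm3_0 : Polynomial.rootMultiplicity 0 q3 = CC := by
    rw [hq3s]
    apply rm_eq_neg
    rw [eval_bisub]
    rw [show Polynomial.eval (0:ℝ) (-(X - C 0)) = 0 from by
      simp only [Polynomial.eval_neg, Polynomial.eval_sub, Polynomial.eval_X, Polynomial.eval_C,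
        sub_zero, neg_zero]]
    rw [show Polynomial.eval (0:ℝ) (-(X + C (b₀ + c₀))) = -(b₀ + c₀) from by
      simp only [Polynomial.eval_neg, Polynomial.eval_add, Polynomial.eval_X, Polynomial.eval_C,
        zero_add]]
    rw [ee_zero_left]
    exact c5
  -- dp and the explicit factors
  have ndp0 : dp ≠ 0 := by
    rw [hdp]; exact neg_ne_zero.mpr (Polynomial.X_add_C_ne_zero _)
  have ndpm : dp ^ m ≠ 0 := pow_ne_zero _ ndp0
  have nddpm : (dp ^ m).natDegree = m := by
    rw [Polynomial.natDegree_pow, nddp, mul_one]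
  have rmdp0 : Polynomial.rootMultiplicity 0 (dp ^ m) = 0 := by
    apply rm_zero
    rw [Polynomial.eval_pow, evdp 0]
    exact pow_ne_zero _ (fun hz => hs₀ (by linarith))
  have rmdpc : Polynomial.rootMultiplicity (-c₀) (dp ^ m) = 0 := by
    apply rm_zero
    rw [Polynomial.eval_pow, evdp (-c₀)]
    exact pow_ne_zero _ (fun hz => hb₀ (by linarith))
  have nXk : ((-X : Polynomial ℝ)) ^ k ≠ 0 :=
    pow_ne_zero _ (neg_ne_zero.mpr Polynomial.X_ne_zero)
  have rmX0 : Polynomial.rootMultiplicity 0 ((-X : Polynomial ℝ) ^ k) = k := by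
    rw [show (-X : Polynomial ℝ) = -(X - C 0) from by rw [Polynomial.C_0, sub_zero]]
    exact rm_neg_pow k 0
  have rmXc : Polynomial.rootMultiplicity (-c₀) ((-X : Polynomial ℝ) ^ k) = 0 := by
    apply rm_zero
    rw [Polynomial.eval_pow, Polynomial.eval_neg, Polynomial.eval_X]
    exact pow_ne_zero _ (fun hz => hc₀ (by linarith))
  have ndXk : ((-X : Polynomial ℝ) ^ k).natDegree = k := by
    rw [Polynomial.natDegree_pow, Polynomial.natDegree_neg, Polynomial.natDegree_X, mul_one]
  have nXm : ((X : Polynomial ℝ)) ^ m ≠ 0 := pow_ne_zero _ Polynomial.X_ne_zero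
  have rmXm0 : Polynomial.rootMultiplicity 0 ((X : Polynomial ℝ) ^ m) = m := by
    rw [hXC0]; exact rm_pow m 0
  have rmXmc : Polynomial.rootMultiplicity (-c₀) ((X : Polynomial ℝ) ^ m) = 0 := by
    apply rm_zero
    rw [Polynomial.eval_pow, Polynomial.eval_X]
    exact pow_ne_zero _ (fun hz => hc₀ (by linarith))
  have ndXm : ((X : Polynomial ℝ) ^ m).natDegree = m := by
    rw [Polynomial.natDegree_pow, Polynomial.natDegree_X, mul_one]
  have nXCk : ((X + C c₀ : Polynomial ℝ)) ^ k ≠ 0 :=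
    pow_ne_zero _ (Polynomial.X_add_C_ne_zero _)
  have rmXC0 : Polynomial.rootMultiplicity 0 ((X + C c₀ : Polynomial ℝ) ^ k) = 0 := by
    apply rm_zero
    rw [Polynomial.eval_pow, Polynomial.eval_add, Polynomial.eval_X, Polynomial.eval_C, zero_add]
    exact pow_ne_zero _ hc₀
  have rmXCc : Polynomial.rootMultiplicity (-c₀) ((X + C c₀ : Polynomial ℝ) ^ k) = k := by
    rw [hXCc]; exact rm_pow k (-c₀)
  have ndXCk : ((X + C c₀ : Polynomial ℝ) ^ k).natDegree = k := by
    rw [Polynomial.natDegree_pow, Polynomial.natDegree_X_add_C, mul_one]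
  have nNXCk : ((-(X + C c₀) : Polynomial ℝ)) ^ k ≠ 0 :=
    pow_ne_zero _ (neg_ne_zero.mpr (Polynomial.X_add_C_ne_zero _))
  have rmNXC0 : Polynomial.rootMultiplicity 0 ((-(X + C c₀) : Polynomial ℝ) ^ k) = 0 := by
    apply rm_zero
    rw [Polynomial.eval_pow, Polynomial.eval_neg, Polynomial.eval_add, Polynomial.eval_X,
      Polynomial.eval_C, zero_add]
    exact pow_ne_zero _ (neg_ne_zero.mpr hc₀)
  have rmNXCc : Polynomial.rootMultiplicity (-c₀) ((-(X + C c₀) : Polynomial ℝ) ^ k) = k := by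
    rw [hXCc]; exact rm_neg_pow k (-c₀)
  have ndNXCk : ((-(X + C c₀) : Polynomial ℝ) ^ k).natDegree = k := by
    rw [Polynomial.natDegree_pow, Polynomial.natDegree_neg, Polynomial.natDegree_X_add_C,
      mul_one]
  -- constants
  have hK1 : ((b₀ + c₀) ^ m * ((-(b₀ + c₀)) ^ m * (c₀ ^ m * (-b₀) ^ k)) : ℝ) ≠ 0 :=
    mul_ne_zero (pow_ne_zero _ hs₀) (mul_ne_zero (pow_ne_zero _ (neg_ne_zero.mpr hs₀))
      (mul_ne_zero (pow_ne_zero _ hc₀) (pow_ne_zero _ (neg_ne_zero.mpr hb₀))))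
  have nK1 : (C ((b₀ + c₀) ^ m * ((-(b₀ + c₀)) ^ m * (c₀ ^ m * (-b₀) ^ k))) : Polynomial ℝ) ≠ 0 :=
    fun hz => hK1 (by simpa using congrArg (Polynomial.eval 0) hz)
  have nK2 : (C (c₀ ^ m * b₀ ^ m) : Polynomial ℝ) ≠ 0 :=
    fun hz => (mul_ne_zero (pow_ne_zero _ hc₀) (pow_ne_zero _ hb₀))
      (by simpa using congrArg (Polynomial.eval 0) hz)
  have nK3 : (C (ee f (-(b₀ + c₀)) c₀) : Polynomial ℝ) ≠ 0 :=
    fun hz => c9 (by simpa using congrArg (Polynomial.eval 0) hz)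
  have rmC : ∀ (r K : ℝ), K ≠ 0 → Polynomial.rootMultiplicity r (C K) = 0 := by
    intro r K hK
    apply rm_zero
    rw [Polynomial.eval_C]
    exact hK
  -- nonzero partial products
  have n12 : q1 * q2 ≠ 0 := mul_ne_zero n1 n2
  have n123 : q1 * q2 * dp ^ m ≠ 0 := mul_ne_zero n12 ndpm
  have n1234 : q1 * q2 * dp ^ m * (-X) ^ k ≠ 0 := mul_ne_zero n123 nXk
  have r1 : q3 * C (ee f (-(b₀ + c₀)) c₀) ≠ 0 := mul_ne_zero n3 nK3
  have r2 : q3 * C (ee f (-(b₀ + c₀)) c₀) * X ^ m ≠ 0 := mul_ne_zero r1 nXm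
  have r3 : q3 * C (ee f (-(b₀ + c₀)) c₀) * X ^ m * (X + C c₀) ^ k ≠ 0 := mul_ne_zero r2 nXCk
  have r4 : q3 * C (ee f (-(b₀ + c₀)) c₀) * X ^ m * (X + C c₀) ^ k * dp ^ m ≠ 0 :=
    mul_ne_zero r3 ndpm
  have r5 : q3 * C (ee f (-(b₀ + c₀)) c₀) * X ^ m * (X + C c₀) ^ k * dp ^ m *
      (-(X + C c₀)) ^ k ≠ 0 := mul_ne_zero r4 nNXCk
  -- the three equations
  have rmL0 : Polynomial.rootMultiplicity 0 Lp = A + k := by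
    rw [hLp, Polynomial.rootMultiplicity_mul (mul_ne_zero n1234 nK1),
      Polynomial.rootMultiplicity_mul n1234, Polynomial.rootMultiplicity_mul n123,
      Polynomial.rootMultiplicity_mul n12, rm1_0, rm2_0, rmdp0, rmX0, rmC 0 _ hK1]
    omega
  have rmR0 : Polynomial.rootMultiplicity 0 Rp = CC + m := by
    rw [hRp, Polynomial.rootMultiplicity_mul (mul_ne_zero r5 nK2),
      Polynomial.rootMultiplicity_mul r5, Polynomial.rootMultiplicity_mul r4,
      Polynomial.rootMultiplicity_mul r3, Polynomial.rootMultiplicity_mul r2,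
      Polynomial.rootMultiplicity_mul r1, rm3_0, rmXm0, rmXC0, rmdp0, rmNXC0,
      rmC 0 _ (mul_ne_zero (pow_ne_zero _ hc₀) (pow_ne_zero _ hb₀)),
      rmC 0 _ c9]
    omega
  have rmLc : Polynomial.rootMultiplicity (-c₀) Lp = CC + CC := by
    rw [hLp, Polynomial.rootMultiplicity_mul (mul_ne_zero n1234 nK1),
      Polynomial.rootMultiplicity_mul n1234, Polynomial.rootMultiplicity_mul n123,
      Polynomial.rootMultiplicity_mul n12, rm1_c, rm2_c, rmdpc, rmXc, rmC (-c₀) _ hK1]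
    omega
  have rmRc : Polynomial.rootMultiplicity (-c₀) Rp = k + k := by
    rw [hRp, Polynomial.rootMultiplicity_mul (mul_ne_zero r5 nK2),
      Polynomial.rootMultiplicity_mul r5, Polynomial.rootMultiplicity_mul r4,
      Polynomial.rootMultiplicity_mul r3, Polynomial.rootMultiplicity_mul r2,
      Polynomial.rootMultiplicity_mul r1, rm3_c, rmXmc, rmXCc, rmdpc, rmNXCc,
      rmC (-c₀) _ (mul_ne_zero (pow_ne_zero _ hc₀) (pow_ne_zero _ hb₀)),
      rmC (-c₀) _ c9]
    omega
  have ndL : Lp.natDegree = pdeg + pdeg + m + k := by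
    rw [hLp, Polynomial.natDegree_mul n1234 nK1, Polynomial.natDegree_mul n123 nXk,
      Polynomial.natDegree_mul n12 ndpm, Polynomial.natDegree_mul n1 n2,
      nd1, nd2, nddpm, ndXk, Polynomial.natDegree_C]
    omega
  have ndR : Rp.natDegree = pdeg + m + k + m + k := by
    rw [hRp, Polynomial.natDegree_mul r5 nK2, Polynomial.natDegree_mul r4 nNXCk,
      Polynomial.natDegree_mul r3 ndpm, Polynomial.natDegree_mul r2 nXCk,
      Polynomial.natDegree_mul r1 nXm, Polynomial.natDegree_mul n3 nK3,
      nd3, ndXm, ndXCk, nddpm, ndNXCk]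
    simp only [Polynomial.natDegree_C]
    omega
  have eq1 : A + k = CC + m := by rw [← rmL0, hLR, rmR0]
  have eq2 : CC + CC = k + k := by rw [← rmLc, hLR, rmRc]
  have eq3 : pdeg + pdeg + m + k = pdeg + m + k + m + k := by rw [← ndL, hLR, ndR]
  -- conclude m = 0 and k = 0
  have hm0 : m = 0 := by
    by_contra hm
    have hmpos : 0 < m := Nat.pos_of_ne_zero hm
    apply hY hmpos
    apply X1_dvd_of_eval
    intro s
    have h1 : ee f 0 s = 0 := by
      rw [ee_zero_left, Polynomial.coeff_eq_zero_of_lt_natTrailingDegree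
        (show 0 < f.natTrailingDegree by omega)]
      simp
    rw [hfe 0 s] at h1
    unfold ev at h1
    rw [show (![s, 0] : Fin 2 → ℝ) = ![0 + s, 0 * s] from by
      funext i; fin_cases i <;> simp]
    exact h1
  have hk0 : k = 0 := by
    by_contra hk
    have hkpos : 0 < k := Nat.pos_of_ne_zero hk
    apply hX hkpos
    apply X0_dvd_of_eval
    have hzero : ∀ w : ℝ, MvPolynomial.eval ![0, w * (0 - w)] P = 0 := by
      intro w
      have h1 : ee fstar 0 w = 0 := by
        rw [ee_zero_left, Polynomial.coeff_eq_zero_of_lt_natTrailingDegree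
          (show 0 < fstar.natTrailingDegree by omega)]
        simp
      rw [hfs 0 w, hfe] at h1
      unfold ev at h1
      rw [show (![0, w * (0 - w)] : Fin 2 → ℝ) = ![w + (0 - w), w * (0 - w)] from by
        funext i; fin_cases i <;> simp]
      exact h1
    exact fun t => eval_zero_line P hzero t
  have hpdeg0 : f.natDegree = 0 := by omega
  have hfC : f = Polynomial.C (f.coeff 0) := Polynomial.eq_C_of_natDegree_eq_zero hpdeg0
  have hCee : ∀ u v : ℝ, ee f u v = (f.coeff 0).eval v := by
    intro u v
    conv_lhs => rw [hfC]
    simp [ee, eeHom]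
  have h4 : ∀ v : ℝ, (f.coeff 0).eval v = (f.coeff 0).eval 0 := by
    intro v
    have := hsymm v 0
    rw [hCee v 0, hCee 0 v] at this
    exact this.symm
  refine ⟨(f.coeff 0).eval 0, fun x y hxy => ?_⟩
  rw [hF x y hxy, hm0, hk0]
  simp only [pow_zero, one_mul, mul_one, div_one]
  rw [← hfe x y, hCee x y, h4 y]
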